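/- arXiv:1501.03628 — 4 statements merged into one kernel-verified Lean document; each statement's English description precedes it below -/
import Mathlib

section
/- Let I be a finite set of cells with water heights h : I → ℝ satisfying h i ≥ 0 for all i, and let Δx > 0 and Δt > 0 be real numbers. Let E be a finite set of edges together with maps a, b : E → I with a e ≠ b e for every edge e, and a flux function F : E → ℝ; define the signed flux of edge e with respect to cell i by F_i(e) = F e if i = a e, F_i(e) = −F e if i = b e, and F_i(e) = 0 otherwise. Define the outflow of cell i by O i = Σ_{e ∈ E} max(F_i(e), 0). Suppose Δt_E : E → ℝ satisfies 0 ≤ Δt_E e ≤ Δt for every edge e, and for every edge e and every cell i with F_i(e) > 0 one has Δt_E e · O i ≤ Δx · h i (i.e. the edge time step does not exceed the draining time Δx·h i / O i of the upwind cell). Then for every cell i the updated water height h i − (1/Δx) · Σ_{e ∈ E} Δt_E e · F_i(e) is nonnegative. -/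
/-- Positivity of the draining-time-modified finite volume update:
cutting off the outgoing flux of each edge at the draining time of its
upwind cell guarantees nonnegative updated water heights. -/
theorem positivity_of_draining_time_update
    {I E : Type*} [Fintype I] [DecidableEq I] [Fintype E]
    (h : I → ℝ) (hh : ∀ i, 0 ≤ h i)
    (Δx Δt : ℝ) (hΔx : 0 < Δx) (hΔt : 0 < Δt)
    (a b : E → I) (hab : ∀ e, a e ≠ b e)
    (F : E → ℝ)
    (Fs : I → E → ℝ)
    (hFs : ∀ i e, Fs i e =
      if i = a e then F e else if i = b e then -F e else 0)
    (ΔtE : E → ℝ)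
    (hΔtE : ∀ e, 0 ≤ ΔtE e ∧ ΔtE e ≤ Δt)
    (hdrain : ∀ e i, 0 < Fs i e →
      ΔtE e * (∑ e', max (Fs i e') 0) ≤ Δx * h i) :
    ∀ i, 0 ≤ h i - (1 / Δx) * ∑ e, ΔtE e * Fs i e := by
  intro i
  have key : ∑ e, ΔtE e * Fs i e ≤ Δx * h i := by
    classical
    have step1 : ∑ e, ΔtE e * Fs i e ≤ ∑ e, ΔtE e * max (Fs i e) 0 := by
      apply Finset.sum_le_sum
      intro e _
      exact mul_le_mul_of_nonneg_left (le_max_left _ _) (hΔtE e).1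
    set S : Finset E := Finset.univ.filter (fun e => 0 < Fs i e) with hS
    have hsum : ∑ e, ΔtE e * max (Fs i e) 0 = ∑ e ∈ S, ΔtE e * Fs i e := by
      rw [← Finset.sum_filter_add_sum_filter_not Finset.univ (fun e => 0 < Fs i e)
        (fun e => ΔtE e * max (Fs i e) 0)]
      have h1 : ∑ e ∈ S, ΔtE e * max (Fs i e) 0 = ∑ e ∈ S, ΔtE e * Fs i e := by
        apply Finset.sum_congr rfl
        intro e he
        rw [hS, Finset.mem_filter] at he
        rw [max_eq_left he.2.le]
      have h2 : ∑ e ∈ Finset.univ.filter (fun e => ¬ 0 < Fs i e),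
          ΔtE e * max (Fs i e) 0 = 0 := by
        apply Finset.sum_eq_zero
        intro e he
        rw [Finset.mem_filter] at he
        rw [max_eq_right (not_lt.mp he.2), mul_zero]
      rw [h1, h2, add_zero]
    rcases S.eq_empty_or_nonempty with hSe | hSn
    · rw [hsum, hSe, Finset.sum_empty] at step1
      exact step1.trans (mul_nonneg hΔx.le (hh i))
    · obtain ⟨e₀, he₀S, he₀max⟩ := S.exists_max_image ΔtE hSn
      have he₀pos : 0 < Fs i e₀ := (Finset.mem_filter.mp he₀S).2
      have step2 : ∑ e ∈ S, ΔtE e * Fs i e ≤ ΔtE e₀ * ∑ e ∈ S, Fs i e := by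
        rw [Finset.mul_sum]
        apply Finset.sum_le_sum
        intro e he
        exact mul_le_mul_of_nonneg_right (he₀max e he)
          ((Finset.mem_filter.mp he).2).le
      have hO : ∑ e ∈ S, Fs i e = ∑ e', max (Fs i e') 0 := by
        rw [← Finset.sum_filter_add_sum_filter_not Finset.univ (fun e => 0 < Fs i e)
          (fun e => max (Fs i e) 0)]
        have h1 : ∑ e ∈ S, max (Fs i e) 0 = ∑ e ∈ S, Fs i e := by
          apply Finset.sum_congr rfl
          intro e he
          rw [max_eq_left ((Finset.mem_filter.mp he).2).le]
        have h2 : ∑ e ∈ Finset.univ.filter (fun e => ¬ 0 < Fs i e),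
            max (Fs i e) 0 = 0 := by
          apply Finset.sum_eq_zero
          intro e he
          rw [max_eq_right (not_lt.mp (Finset.mem_filter.mp he).2)]
        rw [h1, h2, add_zero]
      calc ∑ e, ΔtE e * Fs i e ≤ ∑ e ∈ S, ΔtE e * Fs i e := by rw [← hsum]; exact step1
        _ ≤ ΔtE e₀ * ∑ e ∈ S, Fs i e := step2
        _ = ΔtE e₀ * ∑ e', max (Fs i e') 0 := by rw [hO]
        _ ≤ Δx * h i := hdrain e₀ i he₀pos
  have : (1 / Δx) * ∑ e, ΔtE e * Fs i e ≤ h i := by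
    rw [div_mul_eq_mul_div, one_mul, div_le_iff₀ hΔx, mul_comm]
    exact key
  linarith
end

section
/- Let h ≥ 0 and Δx > 0 be real numbers, let n be a natural number, let F : Fin n → ℝ be a family of edge fluxes and Δt : Fin n → ℝ a family of edge time steps with Δt j ≥ 0 for all j. Assume that for every index j with F j > 0 one has Δt j · (Σ_k max(F k, 0)) ≤ Δx · h. Then h − (1/Δx) · Σ_j Δt j · F j ≥ 0. -/
/-- Single-cell positivity inequality: if on every outflow edge the local
time step is at most the draining time of the cell, the updated water
height is nonnegative. -/
theorem single_cell_positivity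
    (h Δx : ℝ) (hh : 0 ≤ h) (hΔx : 0 < Δx)
    (n : ℕ) (F : Fin n → ℝ) (Δt : Fin n → ℝ)
    (hΔt : ∀ j, 0 ≤ Δt j)
    (hdrain : ∀ j, 0 < F j → Δt j * (∑ k, max (F k) 0) ≤ Δx * h) :
    0 ≤ h - (1 / Δx) * ∑ j, Δt j * F j := by
  set S := ∑ k, max (F k) 0 with hS
  have hS0 : 0 ≤ S := Finset.sum_nonneg (fun k _ => le_max_right _ _)
  have key : ∑ j, Δt j * F j ≤ Δx * h := by
    rcases eq_or_lt_of_le hS0 with hSz | hSpos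
    · have hall : ∀ j, F j ≤ 0 := by
        intro j
        by_contra hj
        push_neg at hj
        have : max (F j) 0 ≤ S :=
          Finset.single_le_sum (f := fun k => max (F k) 0)
            (fun k _ => le_max_right _ _) (Finset.mem_univ j)
        have : 0 < S := lt_of_lt_of_le (lt_max_of_lt_left hj) this
        linarith
      have : ∑ j, Δt j * F j ≤ 0 :=
        Finset.sum_nonpos fun j _ => mul_nonpos_of_nonneg_of_nonpos (hΔt j) (hall j)
      nlinarith [mul_nonneg hΔx.le hh]
    · have step : ∀ j, Δt j * F j ≤ (Δx * h / S) * max (F j) 0 := by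
        intro j
        rcases le_or_gt (F j) 0 with hj | hj
        · have h1 : Δt j * F j ≤ 0 := mul_nonpos_of_nonneg_of_nonpos (hΔt j) hj
          have h2 : 0 ≤ (Δx * h / S) * max (F j) 0 :=
            mul_nonneg (div_nonneg (mul_nonneg hΔx.le hh) hS0) (le_max_right _ _)
          linarith
        · have hd := hdrain j hj
          have hΔtle : Δt j ≤ Δx * h / S := (le_div_iff₀ hSpos).2 hd
          have : Δt j * F j ≤ (Δx * h / S) * F j :=
            mul_le_mul_of_nonneg_right hΔtle hj.le
          simpa [max_eq_left hj.le] using this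
      calc ∑ j, Δt j * F j ≤ ∑ j, (Δx * h / S) * max (F j) 0 :=
            Finset.sum_le_sum fun j _ => step j
        _ = (Δx * h / S) * S := by rw [← Finset.mul_sum]
        _ = Δx * h := by field_simp
  have : (1 / Δx) * ∑ j, Δt j * F j ≤ h := by
    rw [one_div, inv_mul_le_iff₀ hΔx]
    linarith [key]
  linarith
end

section
/- Let g > 0, h > 0, v₁, v₂, θ be real numbers, set c = √(g h), λ = v₁ cos θ + v₂ sin θ, and let A = cos θ • A₁ + sin θ • A₂ with A₁ = !![v₁, h, 0; g, v₁, 0; 0, 0, v₁] and A₂ = !![v₂, 0, h; 0, v₂, 0; g, 0, v₂]. Then the characteristic polynomial of A equals (X − C(λ − c)) · (X − C(λ)) · (X − C(λ + c)); in particular the eigenvalues of A are exactly λ − c, λ and λ + c. -/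
open Polynomial

/-- The characteristic polynomial of the directional Jacobian of the
shallow water system factors with roots v·ξ − c, v·ξ, v·ξ + c. -/
theorem shallow_water_charpoly
    (g h v₁ v₂ θ : ℝ) (hg : 0 < g) (hh : 0 < h) :
    let c := Real.sqrt (g * h)
    let lam := v₁ * Real.cos θ + v₂ * Real.sin θ
    let A₁ : Matrix (Fin 3) (Fin 3) ℝ := !![v₁, h, 0; g, v₁, 0; 0, 0, v₁]
    let A₂ : Matrix (Fin 3) (Fin 3) ℝ := !![v₂, 0, h; 0, v₂, 0; g, 0, v₂]
    let A := Real.cos θ • A₁ + Real.sin θ • A₂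
    A.charpoly = (X - C (lam - c)) * (X - C lam) * (X - C (lam + c)) := by
  intro c lam A₁ A₂ A
  have hc2 : c * c = g * h := Real.mul_self_sqrt (by positivity)
  rw [Matrix.charpoly, Matrix.det_fin_three]
  simp only [Matrix.charmatrix_apply, A, A₁, A₂, Matrix.add_apply, Matrix.smul_apply,
    Matrix.of_apply, Matrix.cons_val', Matrix.cons_val_zero, Matrix.cons_val_one,
    Matrix.head_cons, Matrix.head_fin_const, Matrix.cons_val_fin_one, Matrix.empty_val',
    Matrix.cons_val_two, Matrix.tail_cons, Matrix.diagonal_apply, smul_eq_mul,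
    Fin.isValue, ne_eq, one_ne_zero, not_false_eq_true, if_true, if_false,
    Fin.zero_eq_one_iff, Fin.one_eq_zero_iff]
  norm_num [Matrix.one_apply, Fin.ext_iff]
  have hC : C c * C c = C g * C h := by rw [← C_mul, ← C_mul, hc2]
  have hP : C (Real.sin θ) ^ 2 + C (Real.cos θ) ^ 2 = (1 : ℝ[X]) := by
    rw [← C_pow, ← C_pow, ← C_add, Real.sin_sq_add_cos_sq, C_1]
  simp only [lam, C_add, C_mul]
  linear_combination (X - (C (Real.cos θ) * C v₁ + C (Real.sin θ) * C v₂)) *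
    (hC - C g * C h * hP)
end

section
/- Let g > 0, c̄ > 0, τ, H₀ and b_P be real numbers, and let H, v₁, v₂ : ℝ → ℝ be the data on the sonic circle, assumed to satisfy the lake at rest: H(θ) = H₀ and v₁(θ) = v₂(θ) = 0 for all θ, with averaged velocities v̄₁ = v̄₂ = 0. Then the first-order approximate evolution operator returns the lake at rest values: (1/(2π)) ∫₀^{2π} (H(θ) − (c̄/g)·(v₁(θ)·sign(cos θ) + v₂(θ)·sign(sin θ))) dθ − b_P + (τ/(2π)) ∫₀^{2π} (v̄₁·β₁(θ) + v̄₂·β₂(θ)) dθ = H₀ − b_P for any integrable bottom-slope data β₁, β₂, and (1/(2π)) ∫₀^{2π} (−(g/c̄)·H(θ)·sign(cos θ) + v₁(θ)·(cos²θ + 1/2) + v₂(θ)·sin θ·cos θ) dθ = 0, and (1/(2π)) ∫₀^{2π} (−(g/c̄)·H(θ)·sign(sin θ) + v₁(θ)·sin θ·cos θ + v₂(θ)·(sin²θ + 1/2)) dθ = 0. -/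
open MeasureTheory Real intervalIntegral

lemma measurable_realSign : Measurable Real.sign := by
  unfold Real.sign
  exact Measurable.ite (measurableSet_lt measurable_id measurable_const)
    measurable_const (Measurable.ite (measurableSet_lt measurable_const measurable_id)
      measurable_const measurable_const)

lemma sign_comp_ii (f : ℝ → ℝ) (hf : Continuous f) (a b : ℝ) :
    IntervalIntegrable (fun θ => Real.sign (f θ)) volume a b := by
  rw [intervalIntegrable_iff]
  apply Measure.integrableOn_of_bounded (M := 1) measure_Ioc_lt_top.ne
    ((measurable_realSign.comp hf.measurable).aestronglyMeasurable)
  filter_upwards with x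
  rcases lt_trichotomy (f x) 0 with h | h | h
  · simp [Real.sign_of_neg h]
  · simp [h, Real.sign_zero]
  · simp [Real.sign_of_pos h]

lemma integral_sign_sin : ∫ θ in (0:ℝ)..(2 * π), Real.sign (Real.sin θ) = 0 := by
  have h := intervalIntegral.integral_comp_sub_left (a := (0:ℝ)) (b := 2 * π)
    (fun x => Real.sign (Real.sin x)) (2 * π)
  simp only [sub_zero, sub_self] at h
  have h2 : ∀ x : ℝ, Real.sign (Real.sin (2 * π - x)) = -Real.sign (Real.sin x) := by
    intro x
    rw [show Real.sin (2 * π - x) = -Real.sin x by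
      simp [Real.sin_sub, Real.sin_two_pi, Real.cos_two_pi], Real.sign_neg]
  simp only [h2, intervalIntegral.integral_neg] at h
  linarith

lemma integral_sign_cos : ∫ θ in (0:ℝ)..(2 * π), Real.sign (Real.cos θ) = 0 := by
  have hadd := intervalIntegral.integral_add_adjacent_intervals
    (a := (0:ℝ)) (b := π) (c := 2 * π)
    (sign_comp_ii _ Real.continuous_cos 0 π) (sign_comp_ii _ Real.continuous_cos π (2 * π))
  have h := intervalIntegral.integral_comp_add_right (a := (0:ℝ)) (b := π)
    (fun x => Real.sign (Real.cos x)) π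
  have h2 : ∀ x : ℝ, Real.sign (Real.cos (x + π)) = -Real.sign (Real.cos x) := by
    intro x
    rw [show Real.cos (x + π) = -Real.cos x by simp [Real.cos_add], Real.sign_neg]
  simp only [h2, intervalIntegral.integral_neg, zero_add, two_mul] at h
  rw [show π + π = 2 * π by ring] at h
  linarith

/-- The first-order approximate evolution operator of the FVEG scheme
reproduces the lake at rest state. -/
theorem first_order_evolution_well_balanced
    (g cbar τ H₀ bP : ℝ) (hg : 0 < g) (hc : 0 < cbar)
    (H v₁ v₂ : ℝ → ℝ)
    (hH : ∀ θ, H θ = H₀) (hv₁ : ∀ θ, v₁ θ = 0) (hv₂ : ∀ θ, v₂ θ = 0)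
    (vbar₁ vbar₂ : ℝ) (hvb₁ : vbar₁ = 0) (hvb₂ : vbar₂ = 0)
    (β₁ β₂ : ℝ → ℝ)
    (hβ₁ : IntervalIntegrable β₁ volume 0 (2 * π))
    (hβ₂ : IntervalIntegrable β₂ volume 0 (2 * π)) :
    ((1 / (2 * π)) * ∫ θ in (0:ℝ)..(2 * π),
        (H θ - (cbar / g) * (v₁ θ * Real.sign (Real.cos θ)
          + v₂ θ * Real.sign (Real.sin θ))))
      - bP
      + (τ / (2 * π)) * (∫ θ in (0:ℝ)..(2 * π), (vbar₁ * β₁ θ + vbar₂ * β₂ θ))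
      = H₀ - bP ∧
    (1 / (2 * π)) * ∫ θ in (0:ℝ)..(2 * π),
        (-(g / cbar) * H θ * Real.sign (Real.cos θ)
          + v₁ θ * ((Real.cos θ) ^ 2 + 1 / 2)
          + v₂ θ * Real.sin θ * Real.cos θ) = 0 ∧
    (1 / (2 * π)) * ∫ θ in (0:ℝ)..(2 * π),
        (-(g / cbar) * H θ * Real.sign (Real.sin θ)
          + v₁ θ * Real.sin θ * Real.cos θ
          + v₂ θ * ((Real.sin θ) ^ 2 + 1 / 2)) = 0 := by
  have hπ : (2 : ℝ) * π ≠ 0 := by positivity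
  refine ⟨?_, ?_, ?_⟩
  · simp only [hH, hv₁, hv₂, hvb₁, hvb₂, zero_mul, add_zero, mul_zero, sub_zero,
      intervalIntegral.integral_const, intervalIntegral.integral_zero, smul_eq_mul]
    field_simp
  · have : (fun θ : ℝ => -(g / cbar) * H θ * Real.sign (Real.cos θ)
          + v₁ θ * ((Real.cos θ) ^ 2 + 1 / 2)
          + v₂ θ * Real.sin θ * Real.cos θ)
        = fun θ : ℝ => (-(g / cbar) * H₀) * Real.sign (Real.cos θ) := by
      funext θ; simp [hH, hv₁, hv₂]
    rw [this, intervalIntegral.integral_const_mul, integral_sign_cos]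
    ring
  · have : (fun θ : ℝ => -(g / cbar) * H θ * Real.sign (Real.sin θ)
          + v₁ θ * Real.sin θ * Real.cos θ
          + v₂ θ * ((Real.sin θ) ^ 2 + 1 / 2))
        = fun θ : ℝ => (-(g / cbar) * H₀) * Real.sign (Real.sin θ) := by
      funext θ; simp [hH, hv₁, hv₂]
    rw [this, intervalIntegral.integral_const_mul, integral_sign_sin]
    ring
end
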